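/- For each p ≥ 0, the number of partitions of 2p+1 into at most k parts with exactly one odd part equals the sum over i from 0 to k-1 of the number of partitions of 2p - 2i into at most k parts with all parts even. -/

import Mathlib

lemma finite_base (k n : ℕ) : Finite {s : Multiset ℕ // s.card = k ∧ s.sum = n} := by
  haveI : Finite {m : Multiset (Fin (n+1)) // m.card = k} :=
    (inferInstance : Finite (Sym (Fin (n+1)) k))
  apply Finite.of_injective (β := {m : Multiset (Fin (n+1)) // m.card = k})
    (fun s => ⟨Multiset.map (fun x => (⟨min x n, by omega⟩ : Fin (n+1))) s.val, by simp [s.2.1]⟩)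
  intro s t h
  have key : ∀ u : {s : Multiset ℕ // s.card = k ∧ s.sum = n},
      Multiset.map Fin.val
        (Multiset.map (fun x => (⟨min x n, by omega⟩ : Fin (n+1))) u.val) = u.val := by
    intro u
    rw [Multiset.map_map]
    conv_rhs => rw [show u.val = u.val.map id from by simp]
    refine Multiset.map_congr rfl ?_
    intro x hx
    have hxn : x ≤ n := by
      have h1 := Multiset.le_sum_of_mem hx
      have h2 := u.2.2
      omega
    simp [Function.comp, min_eq_left hxn]
  have h' := congrArg (fun m : {m : Multiset (Fin (n+1)) // m.card = k} =>
      Multiset.map Fin.val m.val) h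
  simp only at h'
  rw [key s, key t] at h'
  exact Subtype.ext h'

noncomputable def Q (k n : ℕ) : ℕ := Nat.card {s : Multiset ℕ // s.card = k ∧ s.sum = n}

lemma finite_pred (k n : ℕ) (P : Multiset ℕ → Prop) :
    Finite {s : Multiset ℕ // s.card = k ∧ s.sum = n ∧ P s} := by
  haveI := finite_base k n
  exact Finite.of_injective
    (fun s : {s : Multiset ℕ // s.card = k ∧ s.sum = n ∧ P s} =>
      (⟨s.val, s.2.1, s.2.2.1⟩ : {s : Multiset ℕ // s.card = k ∧ s.sum = n}))
    (by intro a b h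
        apply Subtype.ext
        rwa [Subtype.mk.injEq] at h)

lemma Q_zero (k : ℕ) : Q k 0 = 1 := by
  rw [Q]
  have : ∀ s : {s : Multiset ℕ // s.card = k ∧ s.sum = 0},
      s = ⟨Multiset.replicate k 0, by simp⟩ := by
    rintro ⟨s, hc, hs⟩
    ext1
    simp only
    rw [Multiset.eq_replicate]
    refine ⟨hc, fun x hx => ?_⟩
    have := Multiset.le_sum_of_mem hx
    omega
  haveI : Unique {s : Multiset ℕ // s.card = k ∧ s.sum = 0} :=
    ⟨⟨⟨Multiset.replicate k 0, by simp⟩⟩, this⟩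
  simp

lemma map_pred_sum {s : Multiset ℕ} (h0 : (0:ℕ) ∉ s) :
    (s.map (· - 1)).sum + s.card = s.sum := by
  induction s using Multiset.induction with
  | empty => simp
  | cons a t ih =>
    simp only [Multiset.map_cons, Multiset.sum_cons, Multiset.card_cons]
    have ha : a ≠ 0 := fun h => h0 (h ▸ Multiset.mem_cons_self a t)
    have ht := ih (fun h => h0 (Multiset.mem_cons_of_mem h))
    omega

lemma R2 {k n : ℕ} (h : n < k + 1) : Q (k+1) n = Q k n := by
  have hzero : ∀ s : {s : Multiset ℕ // s.card = k+1 ∧ s.sum = n}, (0:ℕ) ∈ s.val := by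
    rintro ⟨s, hc, hs⟩
    by_contra h0
    have := map_pred_sum h0
    simp only [hc] at this
    omega
  refine Nat.card_congr ?_
  refine ⟨fun s => ⟨s.val.erase 0, ?_, ?_⟩, fun m => ⟨0 ::ₘ m.val, by simp [m.2.1], by simp [m.2.2]⟩,
    ?_, ?_⟩
  · rw [Multiset.card_erase_of_mem (hzero s), s.2.1]; rfl
  · have := Multiset.cons_erase (hzero s)
    have h2 := congrArg Multiset.sum this
    simp only [Multiset.sum_cons, zero_add] at h2
    rw [h2, s.2.2]
  · intro s
    apply Subtype.ext
    exact Multiset.cons_erase (hzero s)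
  · intro m
    apply Subtype.ext
    exact Multiset.erase_cons_head 0 m.val

lemma R1 {k n : ℕ} (h : k + 1 ≤ n) :
    Q (k+1) n = Q k n + Q (k+1) (n - (k+1)) := by
  haveI := finite_base k n
  haveI := finite_base (k+1) (n - (k+1))
  rw [Q, Q, Q, ← Nat.card_sum]
  refine Nat.card_congr ?_
  refine ⟨fun s => if h0 : (0:ℕ) ∈ s.val then
      Sum.inl ⟨s.val.erase 0, ?_, ?_⟩ else Sum.inr ⟨s.val.map (· - 1), ?_, ?_⟩,
    fun x => Sum.elim (fun m => ⟨0 ::ₘ m.val, by simp [m.2.1], by simp [m.2.2]⟩)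
      (fun t => ⟨t.val.map (· + 1), ?_, ?_⟩) x, ?_, ?_⟩
  · rw [Multiset.card_erase_of_mem h0, s.2.1]; rfl
  · have h2 := congrArg Multiset.sum (Multiset.cons_erase h0)
    simp only [Multiset.sum_cons, zero_add] at h2
    rw [h2, s.2.2]
  · simp [s.2.1]
  · have := map_pred_sum h0
    rw [s.2.1, s.2.2] at this
    omega
  · simp [t.2.1]
  · have : (t.val.map (· + 1)).sum = t.val.sum + t.val.card := by
      have h0 : (0:ℕ) ∉ t.val.map (· + 1) := by simp
      have := map_pred_sum h0
      simp only [Multiset.map_map, Multiset.card_map, Function.comp] at this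
      simp only [Nat.add_sub_cancel, Multiset.map_id'] at this
      omega
    rw [this, t.2.1, t.2.2]
    omega
  · intro s
    by_cases h0 : (0:ℕ) ∈ s.val
    · simp only [dif_pos h0, Sum.elim_inl]
      exact Subtype.ext (Multiset.cons_erase h0)
    · simp only [dif_neg h0, Sum.elim_inr]
      apply Subtype.ext
      simp only [Multiset.map_map, Function.comp]
      conv_rhs => rw [show s.val = s.val.map id from by simp]
      refine Multiset.map_congr rfl ?_
      intro x hx
      have : x ≠ 0 := fun hh => h0 (hh ▸ hx)
      simp; omega
  · rintro (m | t)
    · have h0 : (0:ℕ) ∈ (0 ::ₘ m.val) := Multiset.mem_cons_self 0 m.val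
      simp only [Sum.elim_inl, dif_pos h0]
      refine (dif_pos h0).trans ?_
      congr 1
      exact Subtype.ext (Multiset.erase_cons_head 0 m.val)
    · have h0 : (0:ℕ) ∉ (t.val.map (· + 1)) := by simp
      simp only [Sum.elim_inr, dif_neg h0]
      refine (dif_neg h0).trans ?_
      congr 1
      apply Subtype.ext
      simp only [Multiset.map_map, Function.comp]
      conv_rhs => rw [show t.val = t.val.map id from by simp]
      exact Multiset.map_congr rfl (by intro x _; simp)

lemma shift1 (h : ℕ → ℕ) (c : ℕ) : ∀ N : ℕ,
    ∑ n ∈ Finset.range N, (if c ≤ n then h (n - c) else 0) = ∑ m ∈ Finset.range (N - c), h m := by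
  intro N
  induction N with
  | zero => simp
  | succ N ih =>
    rw [Finset.sum_range_succ, ih]
    by_cases hc : c ≤ N
    · rw [if_pos hc, show N + 1 - c = (N - c) + 1 from by omega, Finset.sum_range_succ]
    · rw [if_neg hc, show N + 1 - c = 0 from by omega, show N - c = 0 from by omega, add_zero]

lemma shift2 (h : ℕ → ℕ) (p : ℕ) : ∀ k : ℕ,
    ∑ i ∈ Finset.range (k+1), (if i ≤ p then h (p - i) else 0)
      = ∑ m ∈ Finset.Ico (p - k) (p + 1), h m := by
  intro k
  induction k with
  | zero => simp [Nat.Ico_succ_singleton]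
  | succ k ih =>
    rw [Finset.sum_range_succ, ih]
    by_cases hc : k + 1 ≤ p
    · rw [if_pos hc, Finset.sum_eq_sum_Ico_succ_bot (show p - (k+1) < p + 1 from by omega),
        show p - (k+1) + 1 = p - k from by omega]
      ring
    · rw [if_neg hc, show p - (k+1) = p - k from by omega, add_zero]

lemma key (k p : ℕ) : ∑ n ∈ Finset.range (p+1), Q k n
    = ∑ i ∈ Finset.range (k+1), (if i ≤ p then Q (k+1) (p - i) else 0) := by
  have step : ∑ n ∈ Finset.range (p+1), Q (k+1) n
      = ∑ n ∈ Finset.range (p+1), Q k n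
        + ∑ m ∈ Finset.range (p - k), Q (k+1) m := by
    rw [show p - k = p + 1 - (k+1) from by omega,
      ← shift1 (Q (k+1)) (k+1) (p+1), ← Finset.sum_add_distrib]
    · refine Finset.sum_congr rfl fun n _ => ?_
      by_cases hn : k + 1 ≤ n
      · rw [if_pos hn, R1 hn]
      · rw [if_neg hn, add_zero, R2 (by omega)]
  have split : ∑ n ∈ Finset.range (p+1), Q (k+1) n
      = ∑ m ∈ Finset.range (p - k), Q (k+1) m
        + ∑ m ∈ Finset.Ico (p - k) (p + 1), Q (k+1) m := by
    rw [Finset.range_eq_Ico, Finset.range_eq_Ico]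
    exact (Finset.sum_Ico_consecutive (Q (k+1)) (m := 0) (n := p - k) (k := p + 1) (by omega) (by omega)).symm
  rw [shift2]
  omega

lemma even_half {e : Multiset ℕ} (he : ∀ x ∈ e, Even x) :
    (e.map (fun x => x/2)).map (fun x => 2*x) = e ∧ 2 * (e.map (fun x => x/2)).sum = e.sum := by
  have h1 : (e.map (fun x => x/2)).map (fun x => 2*x) = e := by
    rw [Multiset.map_map]
    conv_rhs => rw [← Multiset.map_id' e]
    refine Multiset.map_congr rfl fun x hx => ?_
    obtain ⟨y, hy⟩ := he x hx
    simp [Function.comp]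
    omega
  refine ⟨h1, ?_⟩
  conv_rhs => rw [← h1]
  have h2 := Multiset.sum_map_mul_left (s := e.map (fun x => x/2)) (a := 2) (f := fun x => x)
  simpa [Multiset.map_id'] using h2.symm

lemma double_half (m : Multiset ℕ) :
    (m.map (fun x => 2*x)).map (fun x => x/2) = m ∧ (m.map (fun x => 2*x)).sum = 2 * m.sum := by
  constructor
  · rw [Multiset.map_map]
    conv_rhs => rw [← Multiset.map_id' m]
    refine Multiset.map_congr rfl fun x _ => ?_
    simp [Function.comp]
  · have h2 := Multiset.sum_map_mul_left (s := m) (a := 2) (f := fun x => x)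
    simpa [Multiset.map_id'] using h2

lemma rhs_summand (k p i : ℕ) :
    Nat.card {s : Multiset ℕ // s.card = k ∧
        (s.sum : ℤ) = 2 * (p : ℤ) - 2 * (i : ℤ) ∧ ∀ x ∈ s, Even x}
      = if i ≤ p then Q k (p - i) else 0 := by
  by_cases hip : i ≤ p
  · rw [if_pos hip, Q]
    refine Nat.card_congr ?_
    have hsum : ∀ s : Multiset ℕ, (s.sum : ℤ) = 2 * (p : ℤ) - 2 * (i : ℤ) ↔
        s.sum = 2 * (p - i) := fun s => by constructor <;> intro h <;> omega
    refine ⟨fun s => ⟨s.val.map (fun x => x/2), ?_, ?_⟩,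
      fun m => ⟨m.val.map (fun x => 2*x), ?_, ?_, ?_⟩, ?_, ?_⟩
    · simp [s.2.1]
    · have h2 := (even_half s.2.2.2).2
      have h3 := (hsum s.val).1 s.2.2.1
      omega
    · simp [m.2.1]
    · rw [(hsum _).2]
      rw [(double_half m.val).2, m.2.2]
    · intro x hx
      simp only [Multiset.mem_map] at hx
      obtain ⟨y, _, hy⟩ := hx
      exact ⟨y, by omega⟩
    · intro s
      exact Subtype.ext (even_half s.2.2.2).1
    · intro m
      exact Subtype.ext (double_half m.val).1
  · rw [if_neg hip]
    have : IsEmpty {s : Multiset ℕ // s.card = k ∧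
        (s.sum : ℤ) = 2 * (p : ℤ) - 2 * (i : ℤ) ∧ ∀ x ∈ s, Even x} := by
      refine ⟨fun s => ?_⟩
      have h1 := s.2.2.1
      have h2 : (0:ℤ) ≤ (s.val.sum : ℤ) := Int.natCast_nonneg _
      omega
    exact Nat.card_of_isEmpty

lemma odd_decomp {p K : ℕ} (s : Multiset ℕ) (hc : s.card = K+1) (hs : s.sum = 2*p+1)
    (hf : (s.filter (fun x => Odd x)).card = 1) :
    ((s.filter (fun x => Odd x)).sum ::ₘ s.filter (fun x => ¬ Odd x) = s) ∧
    Odd ((s.filter (fun x => Odd x)).sum) ∧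
    (s.filter (fun x => Odd x)).sum ≤ 2*p+1 ∧
    (s.filter (fun x => ¬ Odd x)).card = K ∧
    (s.filter (fun x => ¬ Odd x)).sum = 2*p+1 - (s.filter (fun x => Odd x)).sum ∧
    (∀ x ∈ s.filter (fun x => ¬ Odd x), Even x) := by
  obtain ⟨o, ho⟩ := Multiset.card_eq_one.1 hf
  have hsum_o : (s.filter (fun x => Odd x)).sum = o := by rw [ho]; simp
  have hoo : Odd o := by
    have : o ∈ s.filter (fun x => Odd x) := by rw [ho]; simp
    exact (Multiset.mem_filter.1 this).2
  have hdec := Multiset.filter_add_not (fun x => Odd x) s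
  have hdec' : {o} + s.filter (fun x => ¬ Odd x) = s := by rw [← ho]; exact hdec
  have hsum2 := congrArg Multiset.sum hdec'
  simp only [Multiset.sum_add, Multiset.sum_singleton] at hsum2
  have hcard2 := congrArg Multiset.card hdec'
  simp only [Multiset.card_add, Multiset.card_singleton] at hcard2
  rw [hs] at hsum2
  rw [hc] at hcard2
  refine ⟨?_, hsum_o ▸ hoo, ?_, by omega, ?_, ?_⟩
  · rw [hsum_o, ← Multiset.singleton_add]; exact hdec'
  · omega
  · omega
  · intro x hx
    have := (Multiset.mem_filter.1 hx).2
    simpa using this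

lemma nat_card_sigma {ι : Type*} [Fintype ι] (F : ι → Type*) [∀ i, Finite (F i)] :
    Nat.card (Σ i, F i) = ∑ i, Nat.card (F i) := by
  letI : ∀ i, Fintype (F i) := fun i => Fintype.ofFinite _
  simp [Nat.card_eq_fintype_card]

lemma lhs_eq (K p : ℕ) :
    Nat.card {s : Multiset ℕ // s.card = K+1 ∧ s.sum = 2 * p + 1 ∧
        (s.filter (fun x => Odd x)).card = 1}
      = ∑ a ∈ Finset.range (p+1), Q K (p - a) := by
  have e1 : {s : Multiset ℕ // s.card = K+1 ∧ s.sum = 2 * p + 1 ∧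
        (s.filter (fun x => Odd x)).card = 1}
      ≃ {x : Fin (p+1) × Multiset ℕ // x.2.card = K ∧ x.2.sum = p - x.1.val} := by
    refine ⟨fun s => ⟨(⟨((s.val.filter (fun x => Odd x)).sum - 1)/2, ?_⟩,
        (s.val.filter (fun x => ¬ Odd x)).map (fun x => x/2)), ?_, ?_⟩,
      fun x => ⟨(2*x.val.1.val+1) ::ₘ x.val.2.map (fun y => 2*y), ?_, ?_, ?_⟩, ?_, ?_⟩
    · obtain ⟨-, ho, hle, -, -, -⟩ := odd_decomp s.val s.2.1 s.2.2.1 s.2.2.2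
      obtain ⟨w, hw⟩ := ho
      omega
    · obtain ⟨-, -, -, hcard, -, -⟩ := odd_decomp s.val s.2.1 s.2.2.1 s.2.2.2
      rw [Multiset.card_map]
      exact hcard
    · obtain ⟨-, ho, hle, -, hsum, heven⟩ := odd_decomp s.val s.2.1 s.2.2.1 s.2.2.2
      have h2 := (even_half heven).2
      obtain ⟨w, hw⟩ := ho
      simp only
      omega
    · have hx := x.2
      simp [hx.1]
    · have hx := x.2
      have := (double_half x.val.2).2
      simp only [Multiset.sum_cons, this, hx.2]
      have := x.val.1.isLt
      omega
    · have heq : Multiset.filter (fun x => Odd x) ((2*x.val.1.val+1) ::ₘ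
          x.val.2.map (fun y => 2*y)) = {2*x.val.1.val+1} := by
        rw [Multiset.filter_cons_of_pos _ (show Odd (2*x.val.1.val+1) from ⟨x.val.1.val, by ring⟩)]
        rw [Multiset.filter_eq_nil.2 (by
          intro a ha
          simp only [Multiset.mem_map] at ha
          obtain ⟨y, -, hy⟩ := ha
          rw [← hy]
          simp [Nat.even_iff, Nat.odd_iff] at *)]
        rfl
      rw [heq]
      rfl
    · intro s
      apply Subtype.ext
      obtain ⟨hdec, ho, hle, -, -, heven⟩ := odd_decomp s.val s.2.1 s.2.2.1 s.2.2.2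
      simp only
      rw [(even_half heven).1]
      obtain ⟨w, hw⟩ := ho
      rw [show 2 * (((s.val.filter (fun x => Odd x)).sum - 1)/2) + 1
          = (s.val.filter (fun x => Odd x)).sum from by omega]
      exact hdec
    · intro x
      apply Subtype.ext
      have hodd : Odd (2*x.val.1.val+1) := ⟨x.val.1.val, by ring⟩
      have heven : ∀ y ∈ x.val.2.map (fun y => 2*y), ¬ Odd y := by
        intro a ha
        simp only [Multiset.mem_map] at ha
        obtain ⟨y, -, hy⟩ := ha
        rw [← hy]
        simp [Nat.odd_iff]
      have hfo : Multiset.filter (fun t => Odd t) ((2*x.val.1.val+1) ::ₘ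
          x.val.2.map (fun y => 2*y)) = {2*x.val.1.val+1} := by
        rw [Multiset.filter_cons_of_pos _ hodd,
          Multiset.filter_eq_nil.2 (fun a ha => heven a ha)]
        rfl
      have hfe : Multiset.filter (fun t => ¬ Odd t) ((2*x.val.1.val+1) ::ₘ
          x.val.2.map (fun y => 2*y)) = x.val.2.map (fun y => 2*y) := by
        rw [Multiset.filter_cons_of_neg _ (by simp [Nat.odd_iff] at hodd ⊢),
          Multiset.filter_eq_self.2 (fun a ha => heven a ha)]
      have : (Multiset.filter (fun t => Odd t) ((2*x.val.1.val+1) ::ₘ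
          x.val.2.map (fun y => 2*y))).sum = 2*x.val.1.val+1 := by rw [hfo]; simp
      refine Prod.ext ?_ ?_
      · apply Fin.ext
        simp only [this]
        omega
      · simp only [hfe]
        exact (double_half x.val.2).1
  rw [Nat.card_congr e1]
  have e2 := Equiv.subtypeProdEquivSigmaSubtype
    (fun (a : Fin (p+1)) (m : Multiset ℕ) => m.card = K ∧ m.sum = p - a.val)
  rw [Nat.card_congr e2]
  haveI : ∀ a : Fin (p+1), Finite {m : Multiset ℕ // m.card = K ∧ m.sum = p - a.val} :=
    fun a => finite_base K (p - a.val)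
  rw [nat_card_sigma]
  rw [← Fin.sum_univ_eq_sum_range (fun a => Q K (p - a)) (p+1)]
  rfl

/-- The number of partitions of `2p+1` into at most `k` parts (modeled as
multisets of `k` nonnegative integers) with exactly one odd part equals the sum over
`0 ≤ i ≤ k-1` of the number of partitions of `2p - 2i` into at most `k` parts with all
parts even (the sum condition is stated in `ℤ`, so negative targets contribute nothing). -/
theorem stmt3 (p k : ℕ) :
    Nat.card {s : Multiset ℕ // s.card = k ∧ s.sum = 2 * p + 1 ∧
        (s.filter (fun x => Odd x)).card = 1} =
      ∑ i ∈ Finset.range k,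
        Nat.card {s : Multiset ℕ // s.card = k ∧
          (s.sum : ℤ) = 2 * (p : ℤ) - 2 * (i : ℤ) ∧ ∀ x ∈ s, Even x} := by
  cases k with
  | zero =>
    have hempty : IsEmpty {s : Multiset ℕ // s.card = 0 ∧ s.sum = 2 * p + 1 ∧
        (s.filter (fun x => Odd x)).card = 1} := by
      refine ⟨fun s => ?_⟩
      have h1 := s.2.1
      have h2 := s.2.2.1
      rw [Multiset.card_eq_zero] at h1
      rw [h1] at h2
      simp at h2
    rw [Nat.card_of_isEmpty]
    simp
  | succ K =>
    rw [lhs_eq K p]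
    rw [Finset.sum_congr rfl (fun i _ => rhs_summand (K+1) p i)]
    rw [← key K p]
    exact (Finset.sum_range_reflect (fun n => Q K n) (p+1)).symm ▸
      (Finset.sum_congr rfl (fun a ha => by
        congr 1))
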